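/- Let a > 0, k ≥ 2 a natural number, (λ_p)_{p≥1} a sequence of positive reals, (c₀ₚ), (c₁ₚ) real sequences, and for each p let f_p : [0,a] → ℝ be continuous. Define u_p : [0,a] → ℝ by u_p(x) = cosh(√λ_p x)·c₀ₚ + (sinh(√λ_p x)/√λ_p)·c₁ₚ + ∫₀ˣ (sinh(√λ_p (x−ξ))/√λ_p)·f_p(ξ) dξ. Then for every x ∈ [0,a], Σ_{p=1}^∞ λ_pᵏ·e^{2√λ_p (a−x)}·( u_p(x) + u_p'(x)/√λ_p )² ≤ 3·Σ_{p=1}^∞ (1+λ_p)ᵏ·u_p(a)² + 3·Σ_{p=1}^∞ (1+λ_p)^{k−1}·u_p'(a)² + (3/2)·∫₀ᵃ Σ_{p=1}^∞ λ_p^{k−3/2}·e^{2√λ_p a}·f_p(ξ)² dξ, where the sums of nonnegative terms are interpreted in [0,∞]. -/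

import Mathlib

open MeasureTheory Set
open scoped ENNReal

section Aux

open intervalIntegral

lemma my_cauchy_schwarz {α : Type*} [MeasurableSpace α] (μ : Measure α) (g h : α → ℝ)
    (hg : Integrable (fun t => g t ^ 2) μ) (hh : Integrable (fun t => h t ^ 2) μ)
    (hgh : Integrable (fun t => g t * h t) μ) :
    (∫ t, g t * h t ∂μ) ^ 2 ≤ (∫ t, g t ^ 2 ∂μ) * ∫ t, h t ^ 2 ∂μ := by
  have key : ∀ r : ℝ, 0 ≤ (∫ t, g t ^ 2 ∂μ) * (r * r) + (2 * ∫ t, g t * h t ∂μ) * r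
      + ∫ t, h t ^ 2 ∂μ := by
    intro r
    have h2 : (0:ℝ) ≤ ∫ t, (r * g t + h t) ^ 2 ∂μ :=
      integral_nonneg fun t => sq_nonneg _
    have h3 : ∫ t, (r * g t + h t) ^ 2 ∂μ
        = (∫ t, g t ^ 2 ∂μ) * (r * r) + (2 * ∫ t, g t * h t ∂μ) * r + ∫ t, h t ^ 2 ∂μ := by
      have heq : (fun t => (r * g t + h t) ^ 2)
          = fun t => r ^ 2 * g t ^ 2 + 2 * r * (g t * h t) + h t ^ 2 := by
        funext t; ring
      have hA : Integrable (fun t => r ^ 2 * g t ^ 2) μ := hg.const_mul _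
      have hB : Integrable (fun t => 2 * r * (g t * h t)) μ := hgh.const_mul _
      have hAB : Integrable (fun t => r ^ 2 * g t ^ 2 + 2 * r * (g t * h t)) μ := hA.add hB
      rw [heq, integral_add hAB hh, integral_add hA hB, MeasureTheory.integral_const_mul,
        MeasureTheory.integral_const_mul]
      ring
    linarith [h3 ▸ h2]
  have hd := discrim_le_zero key
  rw [discrim] at hd
  nlinarith [hd]

lemma key_identity {a s : ℝ} (ha : 0 < a) (hs : 0 < s) (c₀ c₁ : ℝ) {g : ℝ → ℝ}
    (hg : Continuous g) {u u' : ℝ → ℝ}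
    (hu : ∀ t ∈ Icc (0:ℝ) a, u t = Real.cosh (s*t) * c₀ + Real.sinh (s*t) / s * c₁ +
      ∫ ξ in (0:ℝ)..t, Real.sinh (s*(t-ξ)) / s * g ξ)
    (hu' : ∀ t ∈ Icc (0:ℝ) a, HasDerivWithinAt u (u' t) (Icc 0 a) t) :
    ∀ t ∈ Icc (0:ℝ) a, u t + u' t / s =
      Real.exp (s*t) * (c₀ + c₁ / s + (1/s) * ∫ ξ in (0:ℝ)..t, Real.exp (-(s*ξ)) * g ξ) := by
  set F : ℝ → ℝ := fun t => ∫ ξ in (0:ℝ)..t, Real.cosh (s*ξ) * g ξ with hF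
  set G : ℝ → ℝ := fun t => ∫ ξ in (0:ℝ)..t, Real.sinh (s*ξ) * g ξ with hG
  have hcF : Continuous fun ξ => Real.cosh (s*ξ) * g ξ :=
    (Real.continuous_cosh.comp (continuous_const.mul continuous_id)).mul hg
  have hcG : Continuous fun ξ => Real.sinh (s*ξ) * g ξ :=
    (Real.continuous_sinh.comp (continuous_const.mul continuous_id)).mul hg
  set U : ℝ → ℝ := fun t => Real.cosh (s*t) * c₀ + Real.sinh (s*t) / s * c₁ +
    (Real.sinh (s*t) / s * F t - Real.cosh (s*t) / s * G t) with hUdef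
  have lemA : ∀ t ∈ Icc (0:ℝ) a, u t = U t := by
    intro t ht
    rw [hu t ht, hUdef]
    simp only
    congr 1
    have hsplit : ∀ ξ : ℝ, Real.sinh (s*(t-ξ)) / s * g ξ
        = Real.sinh (s*t) / s * (Real.cosh (s*ξ) * g ξ)
          - Real.cosh (s*t) / s * (Real.sinh (s*ξ) * g ξ) := by
      intro ξ
      rw [mul_sub, Real.sinh_sub]
      ring
    rw [intervalIntegral.integral_congr (g := fun ξ => Real.sinh (s*t) / s * (Real.cosh (s*ξ) * g ξ)
          - Real.cosh (s*t) / s * (Real.sinh (s*ξ) * g ξ)) (fun ξ _ => hsplit ξ),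
      intervalIntegral.integral_sub ((hcF.intervalIntegrable 0 t).const_mul _)
        ((hcG.intervalIntegrable 0 t).const_mul _),
      intervalIntegral.integral_const_mul, intervalIntegral.integral_const_mul]
  have lemB : ∀ t : ℝ, HasDerivAt U
      (s * Real.sinh (s*t) * c₀ + Real.cosh (s*t) * c₁ +
        (Real.cosh (s*t) * F t - Real.sinh (s*t) * G t)) t := by
    intro t
    have hlin : HasDerivAt (fun t : ℝ => s * t) s t := by
      simpa using (hasDerivAt_id t).const_mul s
    have hch : HasDerivAt (fun t : ℝ => Real.cosh (s*t)) (Real.sinh (s*t) * s) t := hlin.cosh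
    have hsh : HasDerivAt (fun t : ℝ => Real.sinh (s*t)) (Real.cosh (s*t) * s) t := hlin.sinh
    have hFd : HasDerivAt F (Real.cosh (s*t) * g t) t :=
      integral_hasDerivAt_right (hcF.intervalIntegrable 0 t)
        (hcF.stronglyMeasurableAtFilter _ _) hcF.continuousAt
    have hGd : HasDerivAt G (Real.sinh (s*t) * g t) t :=
      integral_hasDerivAt_right (hcG.intervalIntegrable 0 t)
        (hcG.stronglyMeasurableAtFilter _ _) hcG.continuousAt
    have hcomb := ((hch.mul_const c₀).add ((hsh.div_const s).mul_const c₁)).add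
      (((hsh.div_const s).mul hFd).sub ((hch.div_const s).mul hGd))
    refine hcomb.congr_deriv ?_
    field_simp
    ring
  intro t ht
  have hud : HasDerivWithinAt u
      (s * Real.sinh (s*t) * c₀ + Real.cosh (s*t) * c₁ +
        (Real.cosh (s*t) * F t - Real.sinh (s*t) * G t)) (Icc 0 a) t :=
    ((lemB t).hasDerivWithinAt).congr (fun y hy => lemA y hy) (lemA t ht)
  have hueq : u' t = s * Real.sinh (s*t) * c₀ + Real.cosh (s*t) * c₁ +
      (Real.cosh (s*t) * F t - Real.sinh (s*t) * G t) := by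
    have h1 := (hu' t ht).derivWithin ((uniqueDiffOn_Icc ha) t ht)
    have h2 := hud.derivWithin ((uniqueDiffOn_Icc ha) t ht)
    rw [← h1, ← h2]
  have hFG : F t - G t = ∫ ξ in (0:ℝ)..t, Real.exp (-(s*ξ)) * g ξ := by
    rw [hF, hG]
    simp only
    rw [← intervalIntegral.integral_sub (hcF.intervalIntegrable 0 t) (hcG.intervalIntegrable 0 t)]
    apply intervalIntegral.integral_congr
    intro ξ _
    simp only
    rw [← sub_mul, Real.cosh_sub_sinh]
  rw [lemA t ht, hueq, hUdef, ← hFG]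
  simp only
  have hcs : Real.cosh (s*t) + Real.sinh (s*t) = Real.exp (s*t) := Real.cosh_add_sinh _
  field_simp
  linear_combination (s * c₀ + c₁ + (F t - G t)) * hcs

lemma per_p_bound {a x s : ℝ} (ha : 0 < a) (hx0 : 0 ≤ x) (hxa : x ≤ a) (hs : 0 < s)
    {g : ℝ → ℝ} (hg : Continuous g) (c₀ c₁ : ℝ) {u u' : ℝ → ℝ}
    (hkey : ∀ t ∈ Icc (0:ℝ) a, u t + u' t / s =
      Real.exp (s*t) * (c₀ + c₁ / s + (1/s) * ∫ ξ in (0:ℝ)..t, Real.exp (-(s*ξ)) * g ξ)) :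
    Real.exp (2*s*(a-x)) * (u x + u' x / s)^2 ≤
      3 * (u a)^2 + 3 * (u' a)^2 / s^2
        + 3 / (2*s^3) * Real.exp (2*s*a) * ∫ ξ in Icc (0:ℝ) a, g ξ^2 := by
  have hce : Continuous fun ξ => Real.exp (-(s*ξ)) * g ξ :=
    (Real.continuous_exp.comp (continuous_const.mul continuous_id).neg).mul hg
  set H : ℝ → ℝ := fun t => ∫ ξ in (0:ℝ)..t, Real.exp (-(s*ξ)) * g ξ with hH
  set I : ℝ := ∫ ξ in x..a, Real.exp (-(s*ξ)) * g ξ with hI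
  have hadj : H x + I = H a :=
    integral_add_adjacent_intervals (hce.intervalIntegrable 0 x) (hce.intervalIntegrable x a)
  have h1 : Real.exp (s*(a-x)) * (u x + u' x / s)
      = (u a + u' a / s) - Real.exp (s*a) / s * I := by
    rw [hkey x ⟨hx0, hxa⟩, hkey a ⟨ha.le, le_refl a⟩]
    have e1 : Real.exp (s*(a-x)) * Real.exp (s*x) = Real.exp (s*a) := by
      rw [← Real.exp_add]; congr 1; ring
    linear_combination (c₀ + c₁ / s + (1/s) * H x) * e1 + (Real.exp (s*a) / s) * hadj
  have h2 : Real.exp (2*s*(a-x)) * (u x + u' x / s)^2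
      = ((u a + u' a / s) - Real.exp (s*a) / s * I)^2 := by
    rw [← h1, mul_pow, show (2*s*(a-x)) = s*(a-x) + s*(a-x) by ring, Real.exp_add, ← pow_two]
  set C : ℝ := ∫ ξ in Icc (0:ℝ) a, g ξ^2 with hC
  have hq : IntegrableOn (fun ξ => g ξ ^ 2) (Icc (0:ℝ) a) := (hg.pow 2).integrableOn_Icc
  have hCnn : 0 ≤ C := setIntegral_nonneg measurableSet_Icc fun ξ _ => sq_nonneg _
  have h3 : I^2 ≤ 1/(2*s) * C := by
    rw [hI, integral_of_le hxa]
    have cs := my_cauchy_schwarz (volume.restrict (Ioc x a)) (fun ξ => Real.exp (-(s*ξ))) g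
      ((Real.continuous_exp.comp (continuous_const.mul continuous_id).neg).pow 2).integrableOn_Ioc
      (hg.pow 2).integrableOn_Ioc hce.integrableOn_Ioc
    have hE : (∫ ξ in Ioc x a, Real.exp (-(s*ξ))^2) ≤ 1/(2*s) := by
      rw [← integral_of_le hxa]
      have hpt : ∀ ξ : ℝ, Real.exp (-(s*ξ))^2 = Real.exp ((-(2*s))*ξ) := by
        intro ξ
        rw [← Real.exp_nat_mul]
        congr 1; push_cast; ring
      rw [intervalIntegral.integral_congr (g := fun ξ => Real.exp ((-(2*s))*ξ))
        (fun ξ _ => hpt ξ)]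
      rw [intervalIntegral.integral_comp_mul_left Real.exp
          (neg_ne_zero.2 (by positivity) : -(2*s) ≠ 0),
        integral_exp, smul_eq_mul]
      have he1 : Real.exp (-(2*s)*x) ≤ 1 := Real.exp_le_one_iff.2 (by nlinarith)
      have he2 : 0 < Real.exp (-(2*s)*a) := Real.exp_pos _
      have hflip : (-(2*s))⁻¹ * (Real.exp (-(2*s)*a) - Real.exp (-(2*s)*x))
          = (Real.exp (-(2*s)*x) - Real.exp (-(2*s)*a)) / (2*s) := by
        field_simp
        ring
      rw [hflip, div_le_div_iff₀ (by positivity) (by positivity)]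
      nlinarith
    have hG2 : (∫ ξ in Ioc x a, g ξ^2) ≤ C := by
      apply setIntegral_mono_set hq
      · exact Filter.Eventually.of_forall fun ξ => sq_nonneg _
      · exact HasSubset.Subset.eventuallyLE fun ξ hξ => ⟨le_trans hx0 hξ.1.le, hξ.2⟩
    have hGnn : 0 ≤ ∫ ξ in Ioc x a, g ξ^2 :=
      setIntegral_nonneg measurableSet_Ioc fun ξ _ => sq_nonneg _
    calc (∫ ξ in Ioc x a, Real.exp (-(s*ξ)) * g ξ)^2
        ≤ (∫ ξ in Ioc x a, Real.exp (-(s*ξ))^2) * ∫ ξ in Ioc x a, g ξ^2 := cs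
      _ ≤ 1/(2*s) * C := mul_le_mul hE hG2 hGnn (by positivity)
  rw [h2]
  have hE2 : Real.exp (s*a)^2 = Real.exp (2*s*a) := by
    rw [show (2*s*a) = s*a + s*a by ring, Real.exp_add, ← pow_two]
  set A : ℝ := u a
  set B : ℝ := u' a / s with hB
  set T : ℝ := Real.exp (s*a) / s with hT
  have step1 : (A + B - T*I)^2 ≤ 3*A^2 + 3*B^2 + 3*(T*I)^2 := by
    nlinarith [sq_nonneg (A - B), sq_nonneg (B + T*I), sq_nonneg (A + T*I)]
  have hTI : (T*I)^2 = Real.exp (2*s*a)/s^2 * I^2 := by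
    rw [hT, mul_pow, div_pow, hE2]
  have hmul : Real.exp (2*s*a)/s^2 * I^2 ≤ Real.exp (2*s*a)/s^2 * (1/(2*s) * C) :=
    mul_le_mul_of_nonneg_left h3 (by positivity)
  have h5 : 3 * (Real.exp (2*s*a)/s^2 * I^2) ≤ 3/(2*s^3) * Real.exp (2*s*a) * C := by
    calc 3 * (Real.exp (2*s*a)/s^2 * I^2)
        ≤ 3 * (Real.exp (2*s*a)/s^2 * (1/(2*s) * C)) := by linarith
      _ = 3/(2*s^3) * Real.exp (2*s*a) * C := by ring
  have hBsq : 3 * B^2 = 3 * (u' a)^2 / s^2 := by rw [hB, div_pow]; ring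
  linarith [step1, hTI, h5, hBsq]

end Aux

/-- Regularity bound of Theorem 2.1 in the case `k ≥ 2`, in Fourier-coefficient
form; sums of nonnegative terms are taken in `[0,∞]`. -/
theorem stmt_7 (a : ℝ) (ha : 0 < a) (k : ℕ) (hk : 2 ≤ k)
    (lam : ℕ → ℝ) (hlam : ∀ p, 0 < lam p) (c₀ c₁ : ℕ → ℝ)
    (f : ℕ → ℝ → ℝ) (hf : ∀ p, ContinuousOn (f p) (Icc 0 a))
    (u u' : ℕ → ℝ → ℝ)
    (hu : ∀ p x, u p x =
      Real.cosh (Real.sqrt (lam p) * x) * c₀ p +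
      Real.sinh (Real.sqrt (lam p) * x) / Real.sqrt (lam p) * c₁ p +
      ∫ ξ in (0:ℝ)..x,
        Real.sinh (Real.sqrt (lam p) * (x - ξ)) / Real.sqrt (lam p) * f p ξ)
    (hu' : ∀ p, ∀ x ∈ Icc (0:ℝ) a, HasDerivWithinAt (u p) (u' p x) (Icc 0 a) x) :
    ∀ x ∈ Icc (0:ℝ) a,
      (∑' p : ℕ, ENNReal.ofReal
          (lam p ^ k * Real.exp (2 * Real.sqrt (lam p) * (a - x)) *
            (u p x + u' p x / Real.sqrt (lam p)) ^ 2)) ≤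
        3 * (∑' p : ℕ, ENNReal.ofReal ((1 + lam p) ^ k * (u p a) ^ 2)) +
        3 * (∑' p : ℕ, ENNReal.ofReal ((1 + lam p) ^ (k - 1) * (u' p a) ^ 2)) +
        (3 / 2 : ℝ≥0∞) *
          ∫⁻ ξ in Icc (0:ℝ) a, ∑' p : ℕ, ENNReal.ofReal
            (lam p ^ ((k : ℝ) - 3 / 2) * Real.exp (2 * Real.sqrt (lam p) * a) *
              (f p ξ) ^ 2) := by
  intro x hx
  obtain ⟨hx0, hxa⟩ := hx
  have hs : ∀ p, 0 < Real.sqrt (lam p) := fun p => Real.sqrt_pos.2 (hlam p)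
  -- continuous extensions of the `f p`
  have hgex : ∀ p : ℕ, ∃ g : ℝ → ℝ, Continuous g ∧ ∀ t ∈ Icc (0:ℝ) a, g t = f p t := by
    intro p
    refine ⟨IccExtend ha.le ((Icc (0:ℝ) a).restrict (f p)), ?_, ?_⟩
    · exact Continuous.Icc_extend' ((hf p).restrict)
    · intro t ht
      exact IccExtend_of_mem ha.le _ ht
  choose g hgc hgeq using hgex
  -- key identity
  have hkey : ∀ p, ∀ t ∈ Icc (0:ℝ) a, u p t + u' p t / Real.sqrt (lam p) =
      Real.exp (Real.sqrt (lam p) * t) * (c₀ p + c₁ p / Real.sqrt (lam p) +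
        (1/Real.sqrt (lam p)) *
          ∫ ξ in (0:ℝ)..t, Real.exp (-(Real.sqrt (lam p)*ξ)) * g p ξ) := by
    intro p
    refine key_identity ha (hs p) (c₀ p) (c₁ p) (hgc p) ?_ (hu' p)
    intro t ht
    rw [hu p t]
    congr 1
    apply intervalIntegral.integral_congr
    intro ξ hξ
    have hξ' : ξ ∈ Icc (0:ℝ) a := by
      rw [uIcc_of_le ht.1] at hξ
      exact ⟨hξ.1, le_trans hξ.2 ht.2⟩
    simp only [hgeq p ξ hξ']
  have hpb : ∀ p, Real.exp (2*Real.sqrt (lam p)*(a-x)) *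
      (u p x + u' p x / Real.sqrt (lam p))^2 ≤
      3*(u p a)^2 + 3*(u' p a)^2/(Real.sqrt (lam p))^2
        + 3/(2*(Real.sqrt (lam p))^3) * Real.exp (2*Real.sqrt (lam p)*a) *
          ∫ ξ in Icc (0:ℝ) a, (g p ξ)^2 :=
    fun p => per_p_bound ha hx0 hxa (hs p) (hgc p) (c₀ p) (c₁ p) (hkey p)
  have hgf2 : ∀ p, (∫ ξ in Icc (0:ℝ) a, (g p ξ)^2) = ∫ ξ in Icc (0:ℝ) a, (f p ξ)^2 :=
    fun p => setIntegral_congr_fun measurableSet_Icc (fun ξ hξ => by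
      simp only [hgeq p ξ hξ])
  -- the per-p real inequality, in final form
  have hreal : ∀ p, lam p ^ k * Real.exp (2*Real.sqrt (lam p)*(a-x)) *
      (u p x + u' p x / Real.sqrt (lam p))^2
      ≤ 3*((1+lam p)^k*(u p a)^2) + 3*((1+lam p)^(k-1)*(u' p a)^2)
        + (3/2) * ∫ ξ in Icc (0:ℝ) a,
            lam p ^ ((k:ℝ)-3/2) * Real.exp (2*Real.sqrt (lam p)*a) * (f p ξ)^2 := by
    intro p
    set s : ℝ := Real.sqrt (lam p) with hsdef
    have hsp : 0 < s := hs p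
    have hs2 : s^2 = lam p := Real.sq_sqrt (hlam p).le
    have hCnn : (0:ℝ) ≤ ∫ ξ in Icc (0:ℝ) a, (f p ξ)^2 :=
      setIntegral_nonneg measurableSet_Icc fun ξ _ => sq_nonneg _
    have t1 : lam p ^ k * (3*(u p a)^2) ≤ 3*((1+lam p)^k*(u p a)^2) := by
      have hple := pow_le_pow_left₀ (hlam p).le (by linarith : lam p ≤ 1 + lam p) k
      nlinarith [sq_nonneg (u p a)]
    have t2 : lam p ^ k * (3*(u' p a)^2/s^2) ≤ 3*((1+lam p)^(k-1)*(u' p a)^2) := by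
      have hkk : lam p ^ k = lam p ^ (k-1) * lam p := by
        rw [← pow_succ]; congr 1; omega
      have hle : lam p ^ (k-1) ≤ (1+lam p)^(k-1) :=
        pow_le_pow_left₀ (hlam p).le (by linarith) _
      rw [hs2, hkk]
      have hrw : lam p ^ (k-1) * lam p * (3*(u' p a)^2/lam p)
          = 3 * (lam p^(k-1) * (u' p a)^2) := by
        have hcancel : lam p * (lam p)⁻¹ = 1 := mul_inv_cancel₀ (hlam p).ne'
        field_simp
        linear_combination (lam p^(k-1) * (u' p a)^2) * hcancel
      rw [hrw]
      nlinarith [sq_nonneg (u' p a), hle]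
    have t3 : lam p ^ k * (3/(2*s^3) * Real.exp (2*s*a) * ∫ ξ in Icc (0:ℝ) a, (g p ξ)^2)
        = (3/2) * ∫ ξ in Icc (0:ℝ) a,
            lam p ^ ((k:ℝ)-3/2) * Real.exp (2*s*a) * (f p ξ)^2 := by
      rw [hgf2 p, integral_const_mul]
      have e1 : lam p ^ ((3:ℝ)/2) = lam p * s := by
        rw [show (3:ℝ)/2 = 1 + 1/2 by norm_num, Real.rpow_add (hlam p), Real.rpow_one,
          hsdef, Real.sqrt_eq_rpow]
      have e2 : lam p ^ ((k:ℝ)-3/2) * lam p ^ ((3:ℝ)/2) = lam p ^ k := by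
        rw [← Real.rpow_add (hlam p), show (k:ℝ)-3/2+3/2 = (k:ℝ) by ring,
          Real.rpow_natCast]
      have e3 : lam p ^ ((k:ℝ)-3/2) = lam p ^ k / (lam p * s) := by
        rw [← e2, e1, mul_div_cancel_right₀ _ (mul_pos (hlam p) hsp).ne']
      have hs3 : s^3 = lam p * s := by
        rw [pow_succ, hs2]
      rw [e3, hs3]
      field_simp
    calc lam p ^ k * Real.exp (2*s*(a-x)) * (u p x + u' p x / s)^2
        = lam p ^ k * (Real.exp (2*s*(a-x)) * (u p x + u' p x / s)^2) := by ring
      _ ≤ lam p ^ k * (3*(u p a)^2 + 3*(u' p a)^2/s^2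
            + 3/(2*s^3) * Real.exp (2*s*a) * ∫ ξ in Icc (0:ℝ) a, (g p ξ)^2) :=
          mul_le_mul_of_nonneg_left (hpb p) (pow_nonneg (hlam p).le k)
      _ = lam p ^ k * (3*(u p a)^2) + lam p ^ k * (3*(u' p a)^2/s^2)
            + lam p ^ k * (3/(2*s^3) * Real.exp (2*s*a)
              * ∫ ξ in Icc (0:ℝ) a, (g p ξ)^2) := by ring
      _ ≤ 3*((1+lam p)^k*(u p a)^2) + 3*((1+lam p)^(k-1)*(u' p a)^2)
            + (3/2) * ∫ ξ in Icc (0:ℝ) a,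
                lam p ^ ((k:ℝ)-3/2) * Real.exp (2*s*a) * (f p ξ)^2 := by
          linarith [t1, t2, le_of_eq t3]
  -- ENNReal per-p inequality
  have h32 : ENNReal.ofReal ((3:ℝ)/2) = 3/2 := by
    rw [ENNReal.ofReal_div_of_pos (by norm_num : (0:ℝ) < 2)]
    norm_num
  have hperp : ∀ p, ENNReal.ofReal
      (lam p ^ k * Real.exp (2 * Real.sqrt (lam p) * (a - x)) *
        (u p x + u' p x / Real.sqrt (lam p)) ^ 2)
      ≤ 3 * ENNReal.ofReal ((1 + lam p) ^ k * (u p a) ^ 2)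
        + 3 * ENNReal.ofReal ((1 + lam p) ^ (k - 1) * (u' p a) ^ 2)
        + (3/2 : ℝ≥0∞) * ∫⁻ ξ in Icc (0:ℝ) a, ENNReal.ofReal
            (lam p ^ ((k:ℝ) - 3/2) * Real.exp (2 * Real.sqrt (lam p) * a) * (f p ξ) ^ 2) := by
    intro p
    have hint : IntegrableOn
        (fun ξ => lam p ^ ((k:ℝ)-3/2) * Real.exp (2*Real.sqrt (lam p)*a) * (f p ξ)^2)
        (Icc (0:ℝ) a) :=
      (((hf p).pow 2).integrableOn_Icc).const_mul _
    have hofR : ENNReal.ofReal ((3/2) * ∫ ξ in Icc (0:ℝ) a,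
          lam p ^ ((k:ℝ)-3/2) * Real.exp (2*Real.sqrt (lam p)*a) * (f p ξ)^2)
        = (3/2 : ℝ≥0∞) * ∫⁻ ξ in Icc (0:ℝ) a, ENNReal.ofReal
            (lam p ^ ((k:ℝ) - 3/2) * Real.exp (2 * Real.sqrt (lam p) * a) * (f p ξ) ^ 2) := by
      rw [ENNReal.ofReal_mul (by norm_num : (0:ℝ) ≤ 3/2), h32,
        ofReal_integral_eq_lintegral_ofReal hint
          (Filter.Eventually.of_forall fun ξ => mul_nonneg (mul_nonneg
            (Real.rpow_nonneg (hlam p).le _) (Real.exp_pos _).le) (sq_nonneg _))]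
    calc ENNReal.ofReal (lam p ^ k * Real.exp (2 * Real.sqrt (lam p) * (a - x)) *
            (u p x + u' p x / Real.sqrt (lam p)) ^ 2)
        ≤ ENNReal.ofReal (3*((1+lam p)^k*(u p a)^2) + 3*((1+lam p)^(k-1)*(u' p a)^2)
            + (3/2) * ∫ ξ in Icc (0:ℝ) a,
                lam p ^ ((k:ℝ)-3/2) * Real.exp (2*Real.sqrt (lam p)*a) * (f p ξ)^2) :=
          ENNReal.ofReal_le_ofReal (hreal p)
      _ ≤ ENNReal.ofReal (3*((1+lam p)^k*(u p a)^2) + 3*((1+lam p)^(k-1)*(u' p a)^2))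
            + ENNReal.ofReal ((3/2) * ∫ ξ in Icc (0:ℝ) a,
                lam p ^ ((k:ℝ)-3/2) * Real.exp (2*Real.sqrt (lam p)*a) * (f p ξ)^2) :=
          ENNReal.ofReal_add_le
      _ ≤ ENNReal.ofReal (3*((1+lam p)^k*(u p a)^2))
            + ENNReal.ofReal (3*((1+lam p)^(k-1)*(u' p a)^2))
            + ENNReal.ofReal ((3/2) * ∫ ξ in Icc (0:ℝ) a,
                lam p ^ ((k:ℝ)-3/2) * Real.exp (2*Real.sqrt (lam p)*a) * (f p ξ)^2) :=
          add_le_add_left ENNReal.ofReal_add_le _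
      _ = 3 * ENNReal.ofReal ((1 + lam p) ^ k * (u p a) ^ 2)
            + 3 * ENNReal.ofReal ((1 + lam p) ^ (k - 1) * (u' p a) ^ 2)
            + (3/2 : ℝ≥0∞) * ∫⁻ ξ in Icc (0:ℝ) a, ENNReal.ofReal
                (lam p ^ ((k:ℝ) - 3/2) * Real.exp (2 * Real.sqrt (lam p) * a)
                  * (f p ξ) ^ 2) := by
          rw [hofR, ENNReal.ofReal_mul (by norm_num : (0:ℝ) ≤ 3),
            ENNReal.ofReal_mul (by norm_num : (0:ℝ) ≤ 3)]
          norm_num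
  refine le_trans (ENNReal.tsum_le_tsum hperp) ?_
  rw [ENNReal.tsum_add, ENNReal.tsum_add, ENNReal.tsum_mul_left, ENNReal.tsum_mul_left,
    ENNReal.tsum_mul_left]
  have hmeas : ∀ p : ℕ, AEMeasurable (fun ξ => ENNReal.ofReal
      (lam p ^ ((k:ℝ) - 3/2) * Real.exp (2 * Real.sqrt (lam p) * a) * (f p ξ) ^ 2))
      (volume.restrict (Icc (0:ℝ) a)) := by
    intro p
    have h0 : AEMeasurable (f p) (volume.restrict (Icc (0:ℝ) a)) :=
      (hf p).aemeasurable measurableSet_Icc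
    have h1 : AEMeasurable (fun ξ =>
        lam p ^ ((k:ℝ) - 3/2) * Real.exp (2 * Real.sqrt (lam p) * a) * (f p ξ) ^ 2)
        (volume.restrict (Icc (0:ℝ) a)) := by
      have heq2 : (fun ξ =>
          lam p ^ ((k:ℝ) - 3/2) * Real.exp (2 * Real.sqrt (lam p) * a) * (f p ξ) ^ 2)
          = fun ξ => (lam p ^ ((k:ℝ) - 3/2) * Real.exp (2 * Real.sqrt (lam p) * a))
            * (f p ξ * f p ξ) := by
        funext ξ; ring
      rw [heq2]
      exact (h0.mul h0).const_mul _
    exact h1.ennreal_ofReal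
  rw [← lintegral_tsum hmeas]
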